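/- Let d ≥ 19 be an integer. Then for every integer k with 2 ≤ k ≤ ⌊(d+1)/2⌋ − 1, one has |C^d_{3,1}| > |C^d_{3,k}|. -/

import Mathlib

/-- `coefC d r i` is the coefficient of `z^r` in the degree-`d` polynomial
`c_i(z) = (z+i)(z+i-1)⋯(z+i-(d-1))`. -/
noncomputable def coefC (d r : ℕ) (i : ℤ) : ℤ :=
  (∏ j ∈ Finset.range d, (Polynomial.X + Polynomial.C (i - (j : ℤ)))).coeff r

/-- Stirling numbers of the first kind: `stirl n k` is the coefficient of `z^k` in
`∏_{j=0}^{n-1} (z - j)`. -/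
noncomputable def stirl (n k : ℕ) : ℤ :=
  (∏ j ∈ Finset.range n, (Polynomial.X - Polynomial.C (j : ℤ))).coeff k

/-- `Mrd d r = min { C^d_{r,i} : 1 ≤ i ≤ d-2 }`. -/
noncomputable def Mrd (d r : ℕ) : ℤ :=
  sInf {x : ℤ | ∃ i : ℕ, 1 ≤ i ∧ i ≤ d - 2 ∧ x = coefC d r (i : ℤ)}

/-- `Nrd d r = min { C^d_{r,i} : ⌈(d-1)/2⌉ ≤ i ≤ d-2 }`; note `⌈(d-1)/2⌉ = (d-1+1)/2`
in natural-number arithmetic. -/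
noncomputable def Nrd (d r : ℕ) : ℤ :=
  sInf {x : ℤ | ∃ i : ℕ, (d - 1 + 1) / 2 ≤ i ∧ i ≤ d - 2 ∧ x = coefC d r (i : ℤ)}

open Polynomial Finset

noncomputable def hh (n : ℕ) : ℚ := ∑ m ∈ Finset.range n, 1/(m+1)
noncomputable def hh2 (n : ℕ) : ℚ := ∑ m ∈ Finset.range n, 1/((m:ℚ)+1)^2

lemma hh_succ (n : ℕ) : hh (n+1) = hh n + 1/(n+1) := Finset.sum_range_succ _ n
lemma hh2_succ (n : ℕ) : hh2 (n+1) = hh2 n + 1/((n:ℚ)+1)^2 := Finset.sum_range_succ _ n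

lemma coeff_mul_lin (p : ℚ[X]) (a : ℚ) (r : ℕ) :
    (p * (X + C a)).coeff (r+1) = p.coeff r + a * p.coeff (r+1) := by
  rw [mul_add, Polynomial.coeff_add, Polynomial.coeff_mul_X, Polynomial.coeff_mul_C, mul_comm]

lemma coeff_mul_lin_zero (p : ℚ[X]) (a : ℚ) :
    (p * (X + C a)).coeff 0 = a * p.coeff 0 := by
  rw [mul_add, Polynomial.coeff_add, Polynomial.mul_coeff_zero, Polynomial.coeff_X_zero,
    Polynomial.coeff_mul_C]
  ring

lemma innerId (n : ℕ) :
    ((∏ m ∈ range n, (X + C ((m:ℚ)+1))).coeff 0 = (Nat.factorial n : ℚ) ∧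
     (∏ m ∈ range n, (X + C ((m:ℚ)+1))).coeff 1 = (Nat.factorial n : ℚ) * hh n ∧
     (∏ m ∈ range n, (X + C ((m:ℚ)+1))).coeff 2 = (Nat.factorial n : ℚ) * (hh n^2 - hh2 n)/2) := by
  induction n with
  | zero => refine ⟨by simp, by simp [Polynomial.coeff_one, hh], by simp [Polynomial.coeff_one, hh, hh2]⟩
  | succ n ih =>
    obtain ⟨h0, h1, h2⟩ := ih
    rw [Finset.prod_range_succ]
    have hne : ((n:ℚ)+1) ≠ 0 := by positivity
    refine ⟨?_, ?_, ?_⟩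
    · rw [coeff_mul_lin_zero, h0, Nat.factorial_succ]
      push_cast; ring
    · rw [coeff_mul_lin, h0, h1, Nat.factorial_succ, hh_succ]
      field_simp
      push_cast
      ring
    · rw [coeff_mul_lin, h1, h2, Nat.factorial_succ, hh_succ, hh2_succ]
      field_simp
      push_cast
      ring

lemma mainId (i q : ℕ) :
    ((∏ j ∈ range (i+1+q), (X + C ((i:ℚ) - j))).coeff 0 = 0 ∧
     (∏ j ∈ range (i+1+q), (X + C ((i:ℚ) - j))).coeff 1
        = (-1)^q * (Nat.factorial i : ℚ) * (Nat.factorial q : ℚ) ∧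
     (∏ j ∈ range (i+1+q), (X + C ((i:ℚ) - j))).coeff 2
        = (-1)^q * (Nat.factorial i : ℚ) * (Nat.factorial q : ℚ) * (hh i - hh q) ∧
     (∏ j ∈ range (i+1+q), (X + C ((i:ℚ) - j))).coeff 3
        = (-1)^q * (Nat.factorial i : ℚ) * (Nat.factorial q : ℚ)
          * ((hh i - hh q)^2 - hh2 i - hh2 q) / 2) := by
  induction q with
  | zero =>
    have hprod : (∏ j ∈ range (i+1+0), (X + C ((i:ℚ) - j)))
        = (∏ m ∈ range i, (X + C ((m:ℚ)+1))) * X := by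
      rw [Nat.add_zero]
      have : ∀ j ∈ range (i+1), (X + C ((i:ℚ) - j)) = (fun m : ℕ => X + C ((m:ℚ))) (i - j) := by
        intro j hj
        simp only [Finset.mem_range] at hj
        have : ((i - j : ℕ) : ℚ) = (i:ℚ) - j := by
          push_cast [Nat.cast_sub (Nat.lt_succ_iff.mp hj)]; ring
        simp [this]
      rw [Finset.prod_congr rfl this]
      have hr := Finset.prod_range_reflect (fun m : ℕ => X + C ((m:ℚ))) (i+1)
      simp only [Nat.succ_sub_one] at hr
      rw [hr, Finset.prod_range_succ' (fun m : ℕ => X + C ((m:ℚ))) i]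
      simp [add_comm]
    obtain ⟨h0, h1, h2⟩ := innerId i
    rw [hprod]
    refine ⟨by simp, ?_, ?_, ?_⟩
    · rw [show (1:ℕ) = 0 + 1 from rfl, Polynomial.coeff_mul_X, h0]
      simp [hh]
    · rw [show (2:ℕ) = 1 + 1 from rfl, Polynomial.coeff_mul_X, h1]
      simp [hh, hh2]
    · rw [show (3:ℕ) = 2 + 1 from rfl, Polynomial.coeff_mul_X, h2,
        show hh 0 = 0 by simp [hh], show hh2 0 = 0 by simp [hh2], Nat.factorial_zero]
      push_cast; ring
  | succ q ih =>
    obtain ⟨h0, h1, h2, h3⟩ := ih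
    have hstep : (∏ j ∈ range (i+1+(q+1)), (X + C ((i:ℚ) - j)))
        = (∏ j ∈ range (i+1+q), (X + C ((i:ℚ) - j))) * (X + C ((i:ℚ) - (i+1+q : ℕ))) := by
      rw [show i+1+(q+1) = (i+1+q)+1 by ring, Finset.prod_range_succ]
    have hval : ((i:ℚ) - ((i+1+q : ℕ) : ℚ)) = -((q:ℚ)+1) := by push_cast; ring
    have hne : ((q:ℚ)+1) ≠ 0 := by positivity
    rw [hstep, hval]
    refine ⟨?_, ?_, ?_, ?_⟩
    · rw [coeff_mul_lin_zero, h0, mul_zero]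
    · rw [show (1:ℕ) = 0 + 1 from rfl, coeff_mul_lin, h0, h1, Nat.factorial_succ]
      push_cast; ring
    · rw [show (2:ℕ) = 1 + 1 from rfl, coeff_mul_lin, h1, h2, Nat.factorial_succ, hh_succ]
      field_simp
      push_cast
      ring
    · rw [show (3:ℕ) = 2 + 1 from rfl, coeff_mul_lin, h2, h3, Nat.factorial_succ, hh_succ,
        hh2_succ]
      field_simp
      push_cast
      ring

lemma abs_unit (n : ℕ) (x : ℚ) : |(-1:ℚ)^n * x| = |x| := by
  rw [abs_mul, abs_pow, abs_neg, abs_one, one_pow, one_mul]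

lemma hh_mono {m n : ℕ} (h : m ≤ n) : hh m ≤ hh n := by
  apply Finset.sum_le_sum_of_subset_of_nonneg (Finset.range_subset_range.mpr h)
  intro j _ _; positivity

lemma hh_one : hh 1 = 1 := by simp [hh]

lemma hh_one_le {n : ℕ} (h : 1 ≤ n) : 1 ≤ hh n := hh_one ▸ hh_mono h

lemma hh_seventeen : (3:ℚ) ≤ hh 17 := by
  simp only [hh, Finset.sum_range_succ, Finset.sum_range_zero]
  norm_num

lemma hh2_nonneg (n : ℕ) : 0 ≤ hh2 n := by
  apply Finset.sum_nonneg; intro j _; positivity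

lemma hh2_aux : ∀ n : ℕ, hh2 (n+1) ≤ 2 - 1/((n:ℚ)+1) := by
  intro n
  induction n with
  | zero => norm_num [hh2, Finset.sum_range_succ]
  | succ n ih =>
    rw [hh2_succ]
    have h1 : (0:ℚ) < (n:ℚ)+1 := by positivity
    have h2 : (0:ℚ) < (n:ℚ)+2 := by positivity
    have key : 1/((n:ℚ)+2)^2 ≤ 1/((n:ℚ)+1) - 1/((n:ℚ)+2) := by
      rw [div_sub_div _ _ (ne_of_gt h1) (ne_of_gt h2)]
      rw [div_le_div_iff₀ (by positivity) (by positivity)]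
      nlinarith
    push_cast
    rw [show ((n:ℚ)+1+1) = (n:ℚ)+2 from by ring]
    linarith
 
lemma hh2_le (n : ℕ) : hh2 n ≤ 2 := by
  cases n with
  | zero => norm_num [hh2]
  | succ n =>
    have := hh2_aux n
    have : (0:ℚ) < (n:ℚ)+1 := by positivity
    have h := hh2_aux n
    have : 0 < 1/((n:ℚ)+1) := by positivity
    linarith

lemma factIneq : ∀ k : ℕ, 2 ≤ k → ∀ q : ℕ, k ≤ q →
    Nat.factorial k * Nat.factorial q ≤ 2 * Nat.factorial (k + q - 2) := by
  intro k hk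
  induction k, hk using Nat.le_induction with
  | base =>
    intro q hq
    rw [show 2 + q - 2 = q from by omega]
    simp [Nat.factorial]
  | succ k hk ih =>
    intro q hq
    have h1 : k ≤ q := by omega
    have h2 : k + 1 + q - 2 = (k + q - 2) + 1 := by omega
    rw [h2, Nat.factorial_succ, Nat.factorial_succ]
    calc (k+1) * Nat.factorial k * Nat.factorial q
        = (k+1) * (Nat.factorial k * Nat.factorial q) := by ring
      _ ≤ (k+1) * (2 * Nat.factorial (k + q - 2)) := Nat.mul_le_mul_left _ (ih q h1)
      _ ≤ (k+q-2+1) * (2 * Nat.factorial (k + q - 2)) := by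
          apply Nat.mul_le_mul_right; omega
      _ = 2 * ((k+q-2+1) * Nat.factorial (k+q-2)) := by ring

lemma coefC_cast (d : ℕ) (i : ℤ) :
    ((coefC d 3 i : ℤ) : ℚ) = (∏ j ∈ range d, (X + C ((i:ℚ) - (j:ℚ)))).coeff 3 := by
  have h : ((∏ j ∈ range d, (X + C (i - (j:ℤ)))).map (Int.castRingHom ℚ))
      = ∏ j ∈ range d, (X + C ((i:ℚ) - (j:ℚ))) := by
    rw [Polynomial.map_prod]
    apply Finset.prod_congr rfl
    intro j _
    simp
  unfold coefC
  rw [← h, Polynomial.coeff_map]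
  simp

lemma finalNum (t u A : ℚ) (ht : 17 ≤ t) (hu : 4 ≤ u) (hA : u - 3 ≤ A) : 2*(u+4) < t*A := by
  nlinarith [mul_nonneg (by linarith : (0:ℚ) ≤ t-2) (by linarith : (0:ℚ) ≤ u-4),
    mul_nonneg (by linarith : (0:ℚ) ≤ t) (by linarith : (0:ℚ) ≤ A-(u-3))]


set_option maxHeartbeats 2000000 in
theorem stmt_3 (d : ℕ) (hd : 19 ≤ d) (k : ℕ) (hk1 : 2 ≤ k) (hk2 : k ≤ (d + 1) / 2 - 1) :
    |coefC d 3 ((1 : ℕ) : ℤ)| > |coefC d 3 (k : ℤ)| := by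
  have hkq : k ≤ d - 1 - k := by omega
  have hd1 : 1 + 1 + (d - 2) = d := by omega
  have hdk : k + 1 + (d - 1 - k) = d := by omega
  have hq2 : k + (d - 1 - k) - 2 = d - 3 := by omega
  have E1 := (mainId 1 (d-2)).2.2.2
  rw [hd1] at E1
  have E2 := (mainId k (d-1-k)).2.2.2
  rw [hdk] at E2
  -- value of coefC d 3 1
  have v1 : ((coefC d 3 ((1:ℕ):ℤ)) : ℚ)
      = (-1)^(d-2) * ((Nat.factorial (d-2) : ℚ)
          * (((1 - hh (d-2))^2 - 1 - hh2 (d-2)) / 2)) := by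
    rw [coefC_cast]
    push_cast at E1 ⊢
    rw [E1, hh_one, show hh2 1 = 1 from by simp [hh2], Nat.factorial_one]
    push_cast; ring
  have v2 : ((coefC d 3 ((k:ℕ):ℤ)) : ℚ)
      = (-1)^(d-1-k) * ((Nat.factorial k : ℚ) * (Nat.factorial (d-1-k) : ℚ)
          * (((hh k - hh (d-1-k))^2 - hh2 k - hh2 (d-1-k)) / 2)) := by
    rw [coefC_cast]
    push_cast at E2 ⊢
    rw [E2]
    ring
  -- bounds
  have hH3 : (3:ℚ) ≤ hh (d-2) := le_trans hh_seventeen (hh_mono (by omega))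
  have hs2 : hh2 (d-2) ≤ 2 := hh2_le _
  have hu : (4:ℚ) ≤ (hh (d-2) - 1)^2 := by nlinarith
  have hApos : (1:ℚ) ≤ (1 - hh (d-2))^2 - 1 - hh2 (d-2) := by nlinarith
  have abs1 : |((coefC d 3 ((1:ℕ):ℤ)) : ℚ)|
      = (Nat.factorial (d-2) : ℚ) * (((1 - hh (d-2))^2 - 1 - hh2 (d-2)) / 2) := by
    rw [v1, abs_unit, abs_of_nonneg]
    have : (0:ℚ) ≤ (Nat.factorial (d-2) : ℚ) := by positivity
    nlinarith
  have abs2 : |((coefC d 3 ((k:ℕ):ℤ)) : ℚ)|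
      = (Nat.factorial k : ℚ) * (Nat.factorial (d-1-k) : ℚ)
          * (|(hh k - hh (d-1-k))^2 - hh2 k - hh2 (d-1-k)| / 2) := by
    rw [v2, abs_unit, abs_mul, abs_div, abs_of_nonneg (by positivity :
      (0:ℚ) ≤ (Nat.factorial k : ℚ) * (Nat.factorial (d-1-k) : ℚ)),
      show |(2:ℚ)| = 2 from by norm_num]
  have e1 : hh k ≤ hh (d-1-k) := hh_mono hkq
  have e2 : hh (d-1-k) ≤ hh (d-2) := hh_mono (by omega)
  have e3 : (1:ℚ) ≤ hh k := hh_one_le (by omega)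
  have e4 : hh2 k ≤ 2 := hh2_le _
  have e5 : hh2 (d-1-k) ≤ 2 := hh2_le _
  have e6 : 0 ≤ hh2 k := hh2_nonneg _
  have e7 : 0 ≤ hh2 (d-1-k) := hh2_nonneg _
  have hEkb : |(hh k - hh (d-1-k))^2 - hh2 k - hh2 (d-1-k)| ≤ (hh (d-2) - 1)^2 + 4 := by
    rw [abs_le]
    constructor
    · nlinarith [mul_nonneg (by linarith : (0:ℚ) ≤ (hh (d-2) - 1) - (hh (d-1-k) - hh k))
        (by linarith : (0:ℚ) ≤ (hh (d-2) - 1) + (hh (d-1-k) - hh k))]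
    · nlinarith [sq_nonneg (hh k - hh (d-1-k))]
  -- factorial bound
  have fIneq : Nat.factorial k * Nat.factorial (d-1-k) ≤ 2 * Nat.factorial (d-3) := by
    have := factIneq k hk1 (d-1-k) hkq
    rwa [hq2] at this
  have fIneqQ : (Nat.factorial k : ℚ) * (Nat.factorial (d-1-k) : ℚ)
      ≤ 2 * (Nat.factorial (d-3) : ℚ) := by exact_mod_cast fIneq
  have fact2 : (Nat.factorial (d-2) : ℚ) = ((d-3 : ℕ) + 1 : ℚ) * (Nat.factorial (d-3) : ℚ) := by
    rw [show d-2 = (d-3)+1 from by omega, Nat.factorial_succ]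
    push_cast; ring
  have hD : (16:ℚ) ≤ ((d-3 : ℕ) : ℚ) := by exact_mod_cast (by omega : (16:ℕ) ≤ d-3)
  have hF3 : (0:ℚ) < (Nat.factorial (d-3) : ℚ) := by exact_mod_cast Nat.factorial_pos _
  -- the key numeric inequality
  have key : 2*(((hh (d-2) - 1)^2)+4)
      < (((d-3 : ℕ) + 1 : ℚ)) * ((1 - hh (d-2))^2 - 1 - hh2 (d-2)) := by
    apply finalNum _ _ _ (by linarith) hu (by nlinarith)
  -- final chain in ℚ
  have main : |((coefC d 3 ((k:ℕ):ℤ)) : ℚ)| < |((coefC d 3 ((1:ℕ):ℤ)) : ℚ)| := by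
    rw [abs1, abs2]
    calc (Nat.factorial k : ℚ) * (Nat.factorial (d-1-k) : ℚ)
          * (|(hh k - hh (d-1-k))^2 - hh2 k - hh2 (d-1-k)| / 2)
        ≤ (2 * (Nat.factorial (d-3) : ℚ)) * (((hh (d-2) - 1)^2 + 4) / 2) := by
          apply mul_le_mul fIneqQ (by linarith [hEkb]) (by positivity) (by positivity)
      _ = (Nat.factorial (d-3) : ℚ) * ((hh (d-2) - 1)^2 + 4) := by ring
      _ < (Nat.factorial (d-3) : ℚ)
            * ((((d-3 : ℕ) + 1 : ℚ)) * ((1 - hh (d-2))^2 - 1 - hh2 (d-2)) / 2) := by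
          apply mul_lt_mul_of_pos_left _ hF3
          linarith
      _ = (Nat.factorial (d-2) : ℚ) * (((1 - hh (d-2))^2 - 1 - hh2 (d-2)) / 2) := by
          rw [fact2]; ring
  have := main
  rw [← Int.cast_abs, ← Int.cast_abs] at this
  exact_mod_cast this
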